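/- For a set K of gambles, the natural extension E(K) := posi(K ∪ L⁺) is coherent if and only if 0 ∉ E(K). -/

import Mathlib

/-- A gamble is a bounded function. -/
def Bdd {Ω : Type*} (f : Ω → ℝ) : Prop := ∃ M : ℝ, ∀ ω, |f ω| ≤ M

/-- The set of all gambles (bounded functions) on `Ω`. -/
def L (Ω : Type*) : Set (Ω → ℝ) := {f | Bdd f}

/-- Nonnegative, nonzero gambles. -/
def Lpos (Ω : Type*) : Set (Ω → ℝ) := {f | Bdd f ∧ 0 ≤ f ∧ f ≠ 0}

/-- Coherent set of desirable gambles. -/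
def Coherent {Ω : Type*} (D : Set (Ω → ℝ)) : Prop :=
  D ⊆ L Ω ∧ Lpos Ω ⊆ D ∧ (0 : Ω → ℝ) ∉ D ∧
  (∀ f g : Ω → ℝ, f ∈ D → g ∈ D → f + g ∈ D) ∧
  (∀ (c : ℝ) (f : Ω → ℝ), f ∈ D → 0 < c → c • f ∈ D)

/-- `Φ(Ω)`: coherent sets together with the set of all gambles. -/
def Phi (Ω : Type*) : Set (Set (Ω → ℝ)) := {D | Coherent D} ∪ {L Ω}

/-- Closure operator associated to the topped ∩-structure `Φ`. -/
def Cl {Ω : Type*} (A : Set (Ω → ℝ)) : Set (Ω → ℝ) :=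
  ⋂₀ {D | D ∈ Phi Ω ∧ A ⊆ D}

/-- Finite positive linear combinations. -/
def posi {Ω : Type*} (K : Set (Ω → ℝ)) : Set (Ω → ℝ) :=
  {f | ∃ (r : ℕ) (g : Fin (r + 1) → Ω → ℝ) (c : Fin (r + 1) → ℝ),
    (∀ j, g j ∈ K) ∧ (∀ j, 0 < c j) ∧ f = ∑ j, c j • g j}

/-- Natural extension `E(K) := posi(K ∪ L⁺)`. -/
def natExt {Ω : Type*} (K : Set (Ω → ℝ)) : Set (Ω → ℝ) := posi (K ∪ Lpos Ω)

/-- The natural extension `E(K)` is coherent iff `0 ∉ E(K)`. -/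
lemma Bdd.add {Ω : Type*} {f g : Ω → ℝ} (hf : Bdd f) (hg : Bdd g) : Bdd (f + g) := by
  obtain ⟨M, hM⟩ := hf; obtain ⟨N, hN⟩ := hg
  exact ⟨M + N, fun ω => (abs_add_le _ _).trans (add_le_add (hM ω) (hN ω))⟩

lemma Bdd.smul {Ω : Type*} {f : Ω → ℝ} (c : ℝ) (hf : Bdd f) : Bdd (c • f) := by
  obtain ⟨M, hM⟩ := hf
  refine ⟨|c| * M, fun ω => ?_⟩
  simp only [Pi.smul_apply, smul_eq_mul, abs_mul]
  exact mul_le_mul_of_nonneg_left (hM ω) (abs_nonneg c)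

lemma Bdd.zero {Ω : Type*} : Bdd (0 : Ω → ℝ) := ⟨0, by simp⟩

lemma Bdd.sum {Ω : Type*} {n : ℕ} (f : Fin n → Ω → ℝ) (hf : ∀ j, Bdd (f j)) :
    Bdd (∑ j, f j) := by
  classical
  induction n with
  | zero => simpa using Bdd.zero
  | succ m ih =>
      rw [Fin.sum_univ_succ]
      exact (hf 0).add (ih _ fun j => hf j.succ)

theorem stmt1 {Ω : Type*} (K : Set (Ω → ℝ)) (hK : K ⊆ L Ω) :
    Coherent (natExt K) ↔ (0 : Ω → ℝ) ∉ natExt K := by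

  constructor
  · intro h; exact h.2.2.1
  · intro h0
    refine ⟨?_, ?_, h0, ?_, ?_⟩
    · rintro f ⟨r, g, c, hg, hc, rfl⟩
      refine Bdd.sum _ fun j => Bdd.smul _ ?_
      rcases hg j with hgK | hgL
      · exact hK hgK
      · exact hgL.1
    · intro f hf
      exact ⟨0, fun _ => f, fun _ => 1, fun j => Or.inr hf, fun j => one_pos, by simp⟩
    · rintro f g ⟨r1, g1, c1, hg1, hc1, rfl⟩ ⟨r2, g2, c2, hg2, hc2, rfl⟩
      have h : r1 + r2 + 1 + 1 = (r1 + 1) + (r2 + 1) := by omega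
      refine ⟨r1 + r2 + 1, fun j => Fin.addCases g1 g2 (Fin.cast h j),
        fun j => Fin.addCases c1 c2 (Fin.cast h j), ?_, ?_, ?_⟩
      · intro j
        refine Fin.addCases (motive := fun i => Fin.addCases (motive := fun _ => Ω → ℝ) g1 g2 i ∈ K ∪ Lpos Ω) ?_ ?_ (Fin.cast h j) <;> intro i <;> simp only [Fin.addCases_left, Fin.addCases_right, hg1, hg2]
      · intro j
        refine Fin.addCases (motive := fun i => 0 < Fin.addCases (motive := fun _ => ℝ) c1 c2 i) ?_ ?_ (Fin.cast h j) <;> intro i <;> simp only [Fin.addCases_left, Fin.addCases_right, hc1, hc2]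
      · have e : ∑ j : Fin (r1 + r2 + 1 + 1), (Fin.addCases (motive := fun _ => ℝ) c1 c2 (Fin.cast h j) • Fin.addCases (motive := fun _ => Ω → ℝ) g1 g2 (Fin.cast h j)) = ∑ j : Fin ((r1 + 1) + (r2 + 1)), Fin.addCases (motive := fun _ => ℝ) c1 c2 j • Fin.addCases (motive := fun _ => Ω → ℝ) g1 g2 j :=
          Fintype.sum_equiv (finCongr h) _ _ (fun j => rfl)
        rw [e]
        conv_rhs => rw [Fin.sum_univ_add]
        simp only [Fin.addCases_left, Fin.addCases_right]
    · rintro a f ⟨r, g, c, hg, hc, rfl⟩ ha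
      refine ⟨r, g, fun j => a * c j, hg, fun j => mul_pos ha (hc j), ?_⟩
      rw [Finset.smul_sum]
      exact Finset.sum_congr rfl fun j _ => by rw [smul_smul]
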